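/- Let M = ℤ³ with the action of D₄ = ⟨g, h⟩ where g acts by the matrix [[0,0,1],[−1,−1,−1],[0,1,0]] and h by [[−1,0,0],[0,−1,0],[1,1,1]] (columns give images of basis vectors). Then g⁴ = h² = (gh)² = 1 on M, and H¹(D₄, M) ≅ ℤ/4ℤ. -/

import Mathlib

open Matrix

/-- The linear functional `(v, v') ↦ 2 v₂ + v'₀ + v'₁`. -/
def h1AuxFunctional : ((Fin 3 → ℤ) × (Fin 3 → ℤ)) →ₗ[ℤ] ℤ where
  toFun p := 2 * p.1 2 + p.2 0 + p.2 1
  map_add' p q := by simp [Pi.add_apply]; ring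
  map_smul' c p := by simp [Pi.smul_apply, smul_eq_mul]; ring

/-- The functional reduced mod 4, as a `ℤ`-linear map into `ZMod 4`. -/
def h1AuxF : ((Fin 3 → ℤ) × (Fin 3 → ℤ)) →ₗ[ℤ] ZMod 4 :=
  ((Int.castAddHom (ZMod 4)).comp h1AuxFunctional.toAddMonoidHom).toIntLinearMap

lemma h1AuxF_apply (p : (Fin 3 → ℤ) × (Fin 3 → ℤ)) :
    h1AuxF p = ((2 * p.1 2 + p.2 0 + p.2 1 : ℤ) : ZMod 4) := rfl

/-- Let `M = ℤ³` with the `D₄ = ⟨g,h⟩`-action in which `g` acts through the matrix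
`[[0,0,1],[-1,-1,-1],[0,1,0]]` and `h` through `[[-1,0,0],[0,-1,0],[1,1,1]]`
(the matrices act on row vectors, i.e. through their transposes on column
vectors).  Then `g⁴ = h² = (gh)² = 1` on `M`, and `H¹(D₄, M) ≅ ℤ/4ℤ`, where
`H¹` is computed via the efficient resolution: it is the group of pairs
`(v, v')` with `N_g v = 0`, `N_h v' = 0`, `N_{gh} v = N_{gh} v'`, modulo the
pairs `(Δ_g w, Δ_h w)`. -/
theorem h1_d4_picard_lattice_x_m
    (Mg Mh : Matrix (Fin 3) (Fin 3) ℤ)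
    (hMg : Mg = !![0, 0, 1; -1, -1, -1; 0, 1, 0])
    (hMh : Mh = !![-1, 0, 0; 0, -1, 0; 1, 1, 1])
    (Ng Nh Ngh Dg Dh : Matrix (Fin 3) (Fin 3) ℤ)
    (hNg : Ng = 1 + Mgᵀ + Mgᵀ ^ 2 + Mgᵀ ^ 3)
    (hNh : Nh = 1 + Mhᵀ)
    (hNgh : Ngh = 1 + Mgᵀ * Mhᵀ)
    (hDg : Dg = 1 - Mgᵀ) (hDh : Dh = 1 - Mhᵀ)
    (d1 : (Fin 3 → ℤ) →ₗ[ℤ] (Fin 3 → ℤ) × (Fin 3 → ℤ))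
    (hd1 : d1 = LinearMap.prod Dg.mulVecLin Dh.mulVecLin)
    (d2 : ((Fin 3 → ℤ) × (Fin 3 → ℤ)) →ₗ[ℤ]
      ((Fin 3 → ℤ) × ((Fin 3 → ℤ) × (Fin 3 → ℤ))))
    (hd2 : d2 = LinearMap.prod
      (Ng.mulVecLin ∘ₗ LinearMap.fst ℤ _ _)
      (LinearMap.prod (Nh.mulVecLin ∘ₗ LinearMap.snd ℤ _ _)
        (Ngh.mulVecLin ∘ₗ LinearMap.fst ℤ _ _ -
          Ngh.mulVecLin ∘ₗ LinearMap.snd ℤ _ _))) :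
    (Mg ^ 4 = 1 ∧ Mh ^ 2 = 1 ∧ (Mg * Mh) ^ 2 = 1) ∧
      Nonempty
        ((LinearMap.ker d2 ⧸
            Submodule.comap (LinearMap.ker d2).subtype (LinearMap.range d1))
          ≃ₗ[ℤ] ZMod 4) := by
  subst hMg hMh
  -- concrete forms of the auxiliary matrices
  have hNg' : Ng = 0 := by rw [hNg]; decide
  have hNh' : Nh = !![0,0,1;0,0,1;0,0,2] := by rw [hNh]; decide
  have hNgh' : Ngh = !![1,1,-1;0,2,0;-1,1,1] := by rw [hNgh]; decide
  have hDg' : Dg = !![1,1,0;0,2,-1;-1,1,1] := by rw [hDg]; decide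
  have hDh' : Dh = !![2,0,-1;0,2,-1;0,0,0] := by rw [hDh]; decide
  subst hd1 hd2
  refine ⟨⟨by decide, by decide, by decide⟩, ?_⟩
  set D2 := (LinearMap.prod
      (Ng.mulVecLin ∘ₗ LinearMap.fst ℤ _ _)
      (LinearMap.prod (Nh.mulVecLin ∘ₗ LinearMap.snd ℤ _ _)
        (Ngh.mulVecLin ∘ₗ LinearMap.fst ℤ _ _ -
          Ngh.mulVecLin ∘ₗ LinearMap.snd ℤ _ _))) with hD2
  -- characterization of the kernel of d2
  have hker : ∀ v v' : Fin 3 → ℤ, (v, v') ∈ LinearMap.ker D2 ↔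
      (v' 2 = 0 ∧ v 1 = v' 1 ∧ v' 0 = v 0 - v 2) := by
    intro v v'
    rw [LinearMap.mem_ker, hD2]
    constructor
    · intro h
      have h2 : Nh.mulVecLin v' = 0 := congrArg (fun q => q.2.1) h
      have h3 : Ngh.mulVecLin v - Ngh.mulVecLin v' = 0 := congrArg (fun q => q.2.2) h
      have e1 : v' 2 = 0 := by
        have := congrFun h2 0
        simpa [hNh', Matrix.mulVecLin, Matrix.mulVec, dotProduct,
          Fin.sum_univ_three] using this
      have e2 := congrFun h3 1
      have e3 := congrFun h3 0
      simp [hNgh', Matrix.mulVecLin, Matrix.mulVec, dotProduct,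
        Fin.sum_univ_three, Pi.sub_apply] at e2 e3
      refine ⟨e1, by linarith, by linarith⟩
    · rintro ⟨e1, e2, e3⟩
      have : Ng.mulVecLin v = 0 := by rw [hNg']; simp
      refine Prod.ext this (Prod.ext ?_ ?_)
      · funext i; fin_cases i <;>
          simp [hNh', Matrix.mulVecLin, Matrix.mulVec, dotProduct,
            Fin.sum_univ_three, e1]
      · funext i; fin_cases i <;>
          simp [hNgh', Matrix.mulVecLin, Matrix.mulVec, dotProduct,
            Fin.sum_univ_three, Pi.sub_apply] <;> linarith
  -- the map to ZMod 4
  set G : LinearMap.ker D2 →ₗ[ℤ] ZMod 4 :=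
    h1AuxF ∘ₗ (LinearMap.ker D2).subtype with hG
  have hGapp : ∀ x : LinearMap.ker D2,
      G x = ((2 * x.1.1 2 + x.1.2 0 + x.1.2 1 : ℤ) : ZMod 4) := fun x => rfl
  -- the kernel of G is exactly the image of d1
  have hkerG : Submodule.comap (LinearMap.ker D2).subtype
      (LinearMap.range (LinearMap.prod Dg.mulVecLin Dh.mulVecLin)) = LinearMap.ker G := by
    ext x
    simp only [Submodule.mem_comap, LinearMap.mem_range, LinearMap.mem_ker,
      Submodule.coe_subtype]
    constructor
    · rintro ⟨w, hw⟩
      rw [hGapp, ← hw]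
      have e2 : (Dg.mulVecLin w) 2 = -w 0 + w 1 + w 2 := by
        simp [hDg', Matrix.mulVecLin, Matrix.mulVec, dotProduct,
          Fin.sum_univ_three]; try ring
      have f0 : (Dh.mulVecLin w) 0 = 2 * w 0 - w 2 := by
        simp [hDh', Matrix.mulVecLin, Matrix.mulVec, dotProduct,
          Fin.sum_univ_three]; try ring
      have f1 : (Dh.mulVecLin w) 1 = 2 * w 1 - w 2 := by
        simp [hDh', Matrix.mulVecLin, Matrix.mulVec, dotProduct,
          Fin.sum_univ_three]; try ring
      simp only [LinearMap.prod_apply, Function.prod, e2, f0, f1]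
      have : (2 : ℤ) * (-w 0 + w 1 + w 2) + (2 * w 0 - w 2) + (2 * w 1 - w 2)
          = 4 * w 1 := by ring
      rw [this]
      exact (ZMod.intCast_zmod_eq_zero_iff_dvd _ 4).mpr ⟨w 1, by push_cast; ring⟩
    · intro hx
      obtain ⟨⟨v, v'⟩, hmem⟩ := x
      obtain ⟨e1, e2, e3⟩ := (hker v v').mp hmem
      rw [hGapp] at hx
      have hdvd : (4 : ℤ) ∣ (2 * v 2 + v' 0 + v' 1) := by
        have := (ZMod.intCast_zmod_eq_zero_iff_dvd (2 * v 2 + v' 0 + v' 1) 4).mp hx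
        exact_mod_cast this
      obtain ⟨k, hk⟩ := hdvd
      -- 2 v₂ + v'₀ + v'₁ = v₀ + v₁ + v₂ = 4k
      refine ⟨![v 0 - k, k, v 0 + v 2 - 2 * k], ?_⟩
      have hsum : v 0 + v 1 + v 2 = 4 * k := by
        rw [e3] at hk; rw [← e2] at hk; linarith
      refine Prod.ext ?_ ?_
      · funext i; fin_cases i <;>
          simp [hDg', Matrix.mulVecLin, Matrix.mulVec, dotProduct,
            Fin.sum_univ_three] <;> linarith
      · funext i; fin_cases i <;>
          simp [hDh', Matrix.mulVecLin, Matrix.mulVec, dotProduct,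
            Fin.sum_univ_three, e1] <;> linarith
  -- G is surjective
  have hx0 : ((![0,1,0], ![0,1,0]) : (Fin 3 → ℤ) × (Fin 3 → ℤ)) ∈ LinearMap.ker D2 := by
    rw [hker]; refine ⟨?_, ?_, ?_⟩ <;> norm_num [Matrix.cons_val_two, Matrix.vecHead, Matrix.vecTail]
  have hG1 : G ⟨(![0,1,0], ![0,1,0]), hx0⟩ = 1 := by
    rw [hGapp]; norm_num [Matrix.cons_val_two, Matrix.vecHead, Matrix.vecTail]
  have hsurj : Function.Surjective G := by
    intro z
    obtain ⟨n, rfl⟩ := ZMod.intCast_surjective (n := 4) z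
    refine ⟨n • ⟨(![0,1,0], ![0,1,0]), hx0⟩, ?_⟩
    rw [map_zsmul, hG1]
    simp
  exact ⟨(Submodule.quotEquivOfEq _ _ hkerG).trans (G.quotKerEquivOfSurjective hsurj)⟩
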